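/- Define, for parameters p = (a₁, a₂, b₁, c₂, m₁, m₂, α, β) in the domain D := { a₁, a₂, b₁, c₂, m₁, m₂ > 0, α ≠ 0, β ∈ ℝ, a₁ > α²/2 }, the quantities q(p) := 2a₁/α² − 1, a(p) := 2b₁/α², and λ(p) := −a₂ − β²/2 + (a(p)^{q(p)}/Γ(q(p)))·∫₀^∞ c₂·x^{q(p)}·e^{−a(p)·x}/(m₁ + m₂·x) dx. Then the function p ↦ λ(p) is continuous on D. -/

import Mathlib

open Real MeasureTheory Set Filter Topology

/-- The threshold `λ(p)` of the stochastic Beddington–DeAngelis predator–prey model,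
as a function of the parameter tuple `p = (a₁, a₂, b₁, c₂, m₁, m₂, α, β)`:
`λ(p) = −a₂ − β²/2 + (a^q/Γ(q))·∫₀^∞ c₂·x^q·e^(−a·x)/(m₁ + m₂·x) dx`
with `q = 2a₁/α² − 1` and `a = 2b₁/α²`. -/
noncomputable def lamP (p : ℝ × ℝ × ℝ × ℝ × ℝ × ℝ × ℝ × ℝ) : ℝ :=
  let a₁ := p.1; let a₂ := p.2.1; let b₁ := p.2.2.1; let c₂ := p.2.2.2.1
  let m₁ := p.2.2.2.2.1; let m₂ := p.2.2.2.2.2.1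
  let α := p.2.2.2.2.2.2.1; let β := p.2.2.2.2.2.2.2
  let q : ℝ := 2 * a₁ / α ^ 2 - 1
  let a : ℝ := 2 * b₁ / α ^ 2
  (-a₂ - β ^ 2 / 2) + (a ^ q / Real.Gamma q) *
    (∫ x in Set.Ioi (0 : ℝ), c₂ * x ^ q * Real.exp (-a * x) / (m₁ + m₂ * x))

/-- The parameter domain `D`: `a₁, a₂, b₁, c₂, m₁, m₂ > 0`, `α ≠ 0`, `β ∈ ℝ`,
and `a₁ > α²/2`. -/
def paramD : Set (ℝ × ℝ × ℝ × ℝ × ℝ × ℝ × ℝ × ℝ) :=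
  {p | 0 < p.1 ∧ 0 < p.2.1 ∧ 0 < p.2.2.1 ∧ 0 < p.2.2.2.1 ∧ 0 < p.2.2.2.2.1 ∧
       0 < p.2.2.2.2.2.1 ∧ p.2.2.2.2.2.2.1 ≠ 0 ∧ p.1 > p.2.2.2.2.2.2.1 ^ 2 / 2}

private noncomputable def qf (p : ℝ × ℝ × ℝ × ℝ × ℝ × ℝ × ℝ × ℝ) : ℝ :=
  2 * p.1 / p.2.2.2.2.2.2.1 ^ 2 - 1

private noncomputable def af (p : ℝ × ℝ × ℝ × ℝ × ℝ × ℝ × ℝ × ℝ) : ℝ :=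
  2 * p.2.2.1 / p.2.2.2.2.2.2.1 ^ 2

private lemma lamP_eq : lamP = fun p =>
    (-p.2.1 - p.2.2.2.2.2.2.2 ^ 2 / 2) + (af p ^ qf p / Real.Gamma (qf p)) *
      (∫ x in Set.Ioi (0 : ℝ),
        p.2.2.2.1 * x ^ qf p * Real.exp (-af p * x) / (p.2.2.2.2.1 + p.2.2.2.2.2.1 * x)) := rfl

private lemma integ_aux {t c : ℝ} (ht : -1 < t) (hc : 0 < c) :
    IntegrableOn (fun x : ℝ => x ^ t * Real.exp (-c * x)) (Ioi 0) := by
  have h := integrableOn_rpow_mul_exp_neg_mul_rpow (p := 1) ht one_pos hc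
  refine h.congr_fun (fun x hx => ?_) measurableSet_Ioi
  simp only [Real.rpow_one]

private lemma rpow_le_sum {x q lo hi : ℝ} (hx : 0 < x) (h1 : lo ≤ q) (h2 : q ≤ hi) :
    x ^ q ≤ x ^ lo + x ^ hi := by
  rcases le_total x 1 with h | h
  · have h3 := Real.rpow_le_rpow_of_exponent_ge hx h h1
    nlinarith [Real.rpow_nonneg hx.le hi]
  · have h3 := Real.rpow_le_rpow_of_exponent_le h h2
    nlinarith [Real.rpow_nonneg hx.le lo]

/-- the threshold `λ` is a continuous function of the parameters on `D`. -/
theorem stmt14 : ContinuousOn lamP paramD := by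
  rw [lamP_eq]
  intro p₀ hp₀
  obtain ⟨ha₁, ha₂, hb₁, hc₂, hm₁, hm₂, hα, hgt⟩ := hp₀
  apply ContinuousAt.continuousWithinAt
  have hα2 : (0:ℝ) < p₀.2.2.2.2.2.2.1 ^ 2 := by positivity
  -- continuity of the exponent and rate functions
  have hQ : ContinuousAt qf p₀ := by
    unfold qf; exact ((continuousAt_const.mul continuousAt_fst).div (by fun_prop) hα2.ne').sub
      continuousAt_const
  have hA : ContinuousAt af p₀ := by
    unfold af
    exact (continuousAt_const.mul (by fun_prop)).div (by fun_prop) hα2.ne'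
  have hq₀ : 0 < qf p₀ := by
    unfold qf
    have : (1:ℝ) < 2 * p₀.1 / p₀.2.2.2.2.2.2.1 ^ 2 := (one_lt_div hα2).mpr (by linarith)
    linarith
  have ha₀ : 0 < af p₀ := by unfold af; positivity
  have hC2 : ContinuousAt (fun p : ℝ × ℝ × ℝ × ℝ × ℝ × ℝ × ℝ × ℝ => p.2.2.2.1) p₀ := by fun_prop
  have hM1 : ContinuousAt (fun p : ℝ × ℝ × ℝ × ℝ × ℝ × ℝ × ℝ × ℝ => p.2.2.2.2.1) p₀ := by fun_prop
  have hM2 : ContinuousAt (fun p : ℝ × ℝ × ℝ × ℝ × ℝ × ℝ × ℝ × ℝ => p.2.2.2.2.2.1) p₀ := by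
    fun_prop
  -- the eventual neighborhood
  have hU : ∀ᶠ p in 𝓝 p₀, qf p₀ / 2 < qf p ∧ qf p < qf p₀ + 1 ∧ af p₀ / 2 < af p ∧
      p₀.2.2.2.2.1 / 2 < p.2.2.2.2.1 ∧ p.2.2.2.1 < p₀.2.2.2.1 + 1 ∧ 0 < p.2.2.2.1 ∧
      0 < p.2.2.2.2.2.1 := by
    refine (hQ.tendsto.eventually_const_lt (by linarith)).and
      ((hQ.tendsto.eventually_lt_const (by linarith)).and
      ((hA.tendsto.eventually_const_lt (by linarith)).and
      ((hM1.tendsto.eventually_const_lt (by linarith)).and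
      ((hC2.tendsto.eventually_lt_const (by linarith)).and
      ((hC2.tendsto.eventually_const_lt hc₂).and
      (hM2.tendsto.eventually_const_lt hm₂))))))
  -- continuity of the integral
  have hI : ContinuousAt (fun p : ℝ × ℝ × ℝ × ℝ × ℝ × ℝ × ℝ × ℝ =>
      ∫ x in Ioi (0:ℝ),
        p.2.2.2.1 * x ^ qf p * Real.exp (-af p * x) / (p.2.2.2.2.1 + p.2.2.2.2.2.1 * x)) p₀ := by
    apply continuousAt_of_dominated (bound := fun x =>
      (p₀.2.2.2.1 + 1) * (x ^ (qf p₀ / 2) + x ^ (qf p₀ + 1)) * Real.exp (-(af p₀ / 2) * x) /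
        (p₀.2.2.2.2.1 / 2))
    · filter_upwards [hU] with p hp
      obtain ⟨h1, h2, h3, h4, h5, h6, h7⟩ := hp
      apply ContinuousOn.aestronglyMeasurable _ measurableSet_Ioi
      apply ContinuousOn.div
      · exact (continuousOn_const.mul
          (continuousOn_id.rpow_const fun x hx => Or.inl (ne_of_gt hx))).mul
          (Real.continuous_exp.comp_continuousOn (by fun_prop))
      · fun_prop
      · intro x hx
        have hx0 := mem_Ioi.mp hx
        nlinarith
    · filter_upwards [hU] with p hp
      rw [ae_restrict_iff' measurableSet_Ioi]
      refine ae_of_all _ fun x hx => ?_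
      have hx0 := mem_Ioi.mp hx
      obtain ⟨h1, h2, h3, h4, h5, h6, h7⟩ := hp
      have hden : 0 < p.2.2.2.2.1 + p.2.2.2.2.2.1 * x := by nlinarith
      rw [Real.norm_eq_abs, abs_of_nonneg (div_nonneg (mul_nonneg (mul_nonneg h6.le
        (Real.rpow_nonneg hx0.le _)) (Real.exp_nonneg _)) hden.le)]
      gcongr
      all_goals first
        | exact rpow_le_sum hx0 h1.le h2.le
        | positivity
        | linarith
        | nlinarith
    · have i1 := integ_aux (t := qf p₀ / 2) (by linarith) (show (0:ℝ) < af p₀ / 2 by linarith)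
      have i2 := integ_aux (t := qf p₀ + 1) (by linarith) (show (0:ℝ) < af p₀ / 2 by linarith)
      exact ((i1.add i2).const_mul ((p₀.2.2.2.1 + 1) / (p₀.2.2.2.2.1 / 2))).congr
        (ae_of_all _ fun x => by simp only [Pi.add_apply]; ring)
    · rw [ae_restrict_iff' measurableSet_Ioi]
      refine ae_of_all _ fun x hx => ?_
      have hx0 := mem_Ioi.mp hx
      have hxq : ContinuousAt (fun p : ℝ × ℝ × ℝ × ℝ × ℝ × ℝ × ℝ × ℝ => x ^ qf p) p₀ :=
        (Real.continuousAt_const_rpow hx0.ne').comp hQ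
      have hexp : ContinuousAt
          (fun p : ℝ × ℝ × ℝ × ℝ × ℝ × ℝ × ℝ × ℝ => Real.exp (-af p * x)) p₀ :=
        Real.continuous_exp.continuousAt.comp (hA.neg.mul continuousAt_const)
      refine ContinuousAt.div ((hC2.mul hxq).mul hexp) (hM1.add (hM2.mul continuousAt_const)) ?_
      nlinarith
  -- assembling
  have hΓ : ContinuousAt (fun p => Real.Gamma (qf p)) p₀ :=
    (Real.differentiableAt_Gamma
      (fun m => ((neg_nonpos.mpr m.cast_nonneg).trans_lt hq₀).ne')).continuousAt.comp hQ
  have hAQ : ContinuousAt (fun p => af p ^ qf p) p₀ := hA.rpow hQ (Or.inl ha₀.ne')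
  exact ((continuousAt_snd.fst.neg.sub (by fun_prop)).add
    ((hAQ.div hΓ (Real.Gamma_pos_of_pos hq₀).ne').mul hI))
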